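/- Let K > 0, n a natural number, ω, p, q : ℝ → ℝ continuous with |p(t)| ≤ M and |q(t)| ≤ M for all t ≥ 0, for some constant M ≥ 0. If a, b : ℝ → ℝ are differentiable and satisfy the n-th mode system a' = nωb − Ka + p, b' = −nωa − Kb + q, then for all t ≥ 0, a(t)² + b(t)² ≤ max( a(0)² + b(0)², 2M²/K² ). In particular all trajectories of the mode system remain bounded whenever the inflow modes p and q are bounded. -/

import Mathlib

set_option maxHeartbeats 1000000


open Real

/-- Trajectories of the `n`-th mode system remain bounded whenever the inflow
modes `p` and `q` are bounded: for all `t ≥ 0`,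
`a(t)² + b(t)² ≤ max (a(0)² + b(0)²) (2M²/K²)`. -/
theorem water_wheel_mode_bounded
    (K : ℝ) (hK : 0 < K) (n : ℕ) (M : ℝ) (hM : 0 ≤ M)
    (ω p q a b : ℝ → ℝ)
    (hω : Continuous ω) (hp : Continuous p) (hq : Continuous q)
    (hpM : ∀ t ≥ (0 : ℝ), |p t| ≤ M) (hqM : ∀ t ≥ (0 : ℝ), |q t| ≤ M)
    (ha : Differentiable ℝ a) (hb : Differentiable ℝ b)
    (hade : ∀ t, deriv a t = (n : ℝ) * ω t * b t - K * a t + p t)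
    (hbde : ∀ t, deriv b t = -((n : ℝ) * ω t) * a t - K * b t + q t) :
    ∀ t ≥ (0 : ℝ),
      a t ^ 2 + b t ^ 2 ≤ max (a 0 ^ 2 + b 0 ^ 2) (2 * M ^ 2 / K ^ 2) := by
  intro t ht
  set C : ℝ := max (a 0 ^ 2 + b 0 ^ 2) (2 * M ^ 2 / K ^ 2) with hC
  clear_value C
  have hC2 : 2 * M ^ 2 / K ^ 2 ≤ C := hC ▸ le_max_right _ _
  have hC0 : 0 ≤ C := le_trans (by positivity) hC2
  have h2M : 2 * M ^ 2 ≤ K ^ 2 * C := by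
    rw [div_le_iff₀ (by positivity)] at hC2
    linarith [hC2]
  refine le_of_forall_pos_le_add ?_
  intro ε hε
  set f : ℝ → ℝ := fun s => a s ^ 2 + b s ^ 2 with hf
  set f' : ℝ → ℝ := fun s => 2 * a s * deriv a s + 2 * b s * deriv b s with hf'
  have hderiv : ∀ x : ℝ, HasDerivAt f (f' x) x := by
    intro x
    have h1 : HasDerivAt (fun s => a s ^ 2 + b s ^ 2) (((2:ℕ):ℝ) * a x ^ (2 - 1) * deriv a x + ((2:ℕ):ℝ) * b x ^ (2 - 1) * deriv b x) x :=
      ((ha x).hasDerivAt.pow 2).add ((hb x).hasDerivAt.pow 2)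
    convert h1 using 1
    simp only [hf', pow_one]
    ring
  have hcont : ContinuousOn f (Set.Icc 0 t) :=
    fun x _ => (hderiv x).continuousAt.continuousWithinAt
  have hdw : ∀ x ∈ Set.Ico (0:ℝ) t, HasDerivWithinAt f (f' x) (Set.Ici x) x :=
    fun x _ => (hderiv x).hasDerivWithinAt
  have hinit : f 0 ≤ (fun _ : ℝ => C + ε) 0 := by
    have h0 : a 0 ^ 2 + b 0 ^ 2 ≤ C := hC ▸ le_max_left _ _
    simpa [hf] using le_trans h0 (by linarith : C ≤ C + ε)
  have hB : ∀ x : ℝ, HasDerivAt (fun _ : ℝ => C + ε) ((fun _ : ℝ => (0:ℝ)) x) x :=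
    fun x => hasDerivAt_const x _
  have hbound : ∀ x ∈ Set.Ico (0:ℝ) t, f x = (fun _ : ℝ => C + ε) x →
      f' x < (fun _ : ℝ => (0:ℝ)) x := by
    intro x hx hfx
    have hx0 : (0:ℝ) ≤ x := hx.1
    have hp2 : p x ^ 2 ≤ M ^ 2 := by
      have := hpM x hx0
      nlinarith [abs_nonneg (p x), sq_abs (p x)]
    have hq2 : q x ^ 2 ≤ M ^ 2 := by
      have := hqM x hx0
      nlinarith [abs_nonneg (q x), sq_abs (q x)]
    have hveq : a x ^ 2 + b x ^ 2 = C + ε := hfx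
    have hvpos : (0:ℝ) < C + ε := by linarith
    have hKC : 0 < K * (C + ε) := mul_pos hK hvpos
    -- Cauchy-Schwarz step: (ap+bq)^2 < (K(C+ε))^2
    have hsq : (a x * p x + b x * q x) ^ 2 < (K * (C + ε)) ^ 2 := by
      have hcs : (a x * p x + b x * q x) ^ 2 ≤
          (a x ^ 2 + b x ^ 2) * (p x ^ 2 + q x ^ 2) := by
        nlinarith [sq_nonneg (a x * q x - b x * p x)]
      have h1 : (a x ^ 2 + b x ^ 2) * (p x ^ 2 + q x ^ 2) ≤ (C + ε) * (2 * M ^ 2) := by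
        rw [hveq]
        nlinarith
      have h2 : (C + ε) * (2 * M ^ 2) < (K * (C + ε)) ^ 2 := by
        have hKε : 2 * M ^ 2 < K ^ 2 * (C + ε) := by
          nlinarith [h2M, mul_pos (pow_pos hK 2) hε]
        calc (C + ε) * (2 * M ^ 2) < (C + ε) * (K ^ 2 * (C + ε)) :=
              (mul_lt_mul_iff_right₀ hvpos).mpr hKε
          _ = (K * (C + ε)) ^ 2 := by ring
      linarith
    have hlin : a x * p x + b x * q x < K * (C + ε) := by
      nlinarith [hsq, hKC]
    have hfd : f' x = -2 * K * (a x ^ 2 + b x ^ 2) + 2 * (a x * p x + b x * q x) := by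
      simp only [hf', hade x, hbde x]
      ring
    show f' x < 0
    rw [hfd, hveq]
    linarith [hlin]
  have key := image_le_of_deriv_right_lt_deriv_boundary hcont hdw hinit hB hbound
    ⟨ht, le_refl t⟩
  simpa [hf] using key
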